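/- Conversely, if P_1 is a type of length n−t that is a type of P_x after t deletions (where x ∈ Z_ℓ^n), then there exists a vector y ∈ Z_ℓ^{n−t} obtained from x by deleting t components such that P_y = P_1. -/

import Mathlib

/-- The type (empirical distribution) of a vector `x ∈ Z_ℓ^n`. -/
def vecType {n ℓ : ℕ} (x : Fin n → Fin ℓ) : Fin ℓ → ℚ :=
  fun a => ((Finset.univ.filter (fun i => x i = a)).card : ℚ) / n

/-- `P` is a type of length `n` on the alphabet `Z_ℓ`. -/
def IsType (ℓ n : ℕ) (P : Fin ℓ → ℚ) : Prop :=
  (∀ a, ∃ m : ℕ, P a = (m : ℚ) / n) ∧ ∑ a, P a = 1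

/-- `P1` (of length `n - t`) is a type of `P2` (of length `n`) after `t` deletions. -/
def TypeAfterDel (ℓ n t : ℕ) (P1 P2 : Fin ℓ → ℚ) : Prop :=
  (∀ a, ((n - t : ℕ) : ℚ) * P1 a ≤ (n : ℚ) * P2 a) ∧
    ∑ a, ((n : ℚ) * P2 a - ((n - t : ℕ) : ℚ) * P1 a) = (t : ℚ)
/-- Conversely, every type of `P_x` after `t` deletions is realized
by some vector obtained from `x` by deleting `t` components. -/
theorem deletion_of_type (ℓ n t : ℕ) (ht : t ≤ n) (x : Fin n → Fin ℓ)
    (P1 : Fin ℓ → ℚ) (hP1 : IsType ℓ (n - t) P1)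
    (h : TypeAfterDel ℓ n t P1 (vecType x)) :
    ∃ (y : Fin (n - t) → Fin ℓ) (φ : Fin (n - t) → Fin n),
      StrictMono φ ∧ (∀ j, y j = x (φ j)) ∧ vecType y = P1 := by
  classical
  -- first, n - t ≠ 0
  have hnt : 0 < n - t := by
    rcases Nat.eq_zero_or_pos (n - t) with h0 | h0
    · exfalso
      have := hP1.2
      have hz : ∀ a, P1 a = 0 := by
        intro a
        obtain ⟨m, hm⟩ := hP1.1 a
        rw [hm, h0]; simp
      simp [hz] at this
    · exact h0
  have hn : 0 < n := lt_of_lt_of_le hnt (Nat.sub_le n t)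
  set c : Fin ℓ → ℕ := fun a => (Finset.univ.filter (fun i => x i = a)).card with hc
  have hvec : ∀ a, (n : ℚ) * vecType x a = (c a : ℚ) := by
    intro a
    have : (n : ℚ) ≠ 0 := Nat.cast_ne_zero.mpr hn.ne'
    simp only [vecType, hc]
    field_simp
  choose m hm using hP1.1
  have hmP : ∀ a, ((n - t : ℕ) : ℚ) * P1 a = (m a : ℚ) := by
    intro a
    have : ((n - t : ℕ) : ℚ) ≠ 0 := Nat.cast_ne_zero.mpr hnt.ne'
    rw [hm a, mul_comm, div_mul_cancel₀ _ this]
  have hmc : ∀ a, m a ≤ c a := by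
    intro a
    have := h.1 a
    rw [hmP a, hvec a] at this
    exact_mod_cast this
  have hsumc : ∑ a, c a = n := by
    have := Finset.card_eq_sum_card_fiberwise (f := x)
      (fun i (_ : i ∈ (Finset.univ : Finset (Fin n))) => Finset.mem_univ (x i))
    simpa [hc] using this.symm
  have hsumm : ∑ a, m a = n - t := by
    have h2 := h.2
    have : ∑ a, ((n : ℚ) * vecType x a - ((n - t : ℕ) : ℚ) * P1 a)
        = ∑ a, ((c a : ℚ) - (m a : ℚ)) := by
      apply Finset.sum_congr rfl
      intro a _
      rw [hvec a, hmP a]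
    rw [this, Finset.sum_sub_distrib] at h2
    have hcast : ((∑ a, c a : ℕ) : ℚ) - ((∑ a, m a : ℕ) : ℚ) = (t : ℚ) := by
      push_cast
      convert h2 using 2 <;> simp
    rw [hsumc] at hcast
    have : ((∑ a, m a : ℕ) : ℚ) = ((n - t : ℕ) : ℚ) := by
      have htn : ((n - t : ℕ) : ℚ) = (n : ℚ) - (t : ℚ) := by
        push_cast [Nat.cast_sub ht]; ring
      rw [htn]; linarith
    exact_mod_cast this
  -- pick subsets S a ⊆ fiber a with card m a
  have hex : ∀ a : Fin ℓ, ∃ S ⊆ Finset.univ.filter (fun i => x i = a), S.card = m a := by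
    intro a
    exact Finset.exists_subset_card_eq (hmc a)
  choose S hSsub hScard using hex
  set T : Finset (Fin n) := Finset.univ.biUnion S with hT
  have hfib : ∀ a, ∀ i ∈ S a, x i = a := by
    intro a i hi
    have := hSsub a hi
    simpa using (Finset.mem_filter.mp this).2
  have hdisj : ∀ a ∈ (Finset.univ : Finset (Fin ℓ)), ∀ b ∈ Finset.univ, a ≠ b →
      Disjoint (S a) (S b) := by
    intro a _ b _ hab
    refine Finset.disjoint_left.mpr ?_
    intro i hia hib
    exact hab ((hfib a i hia).symm.trans (hfib b i hib))
  have hTcard : T.card = n - t := by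
    rw [hT, Finset.card_biUnion hdisj]
    simp only [hScard]
    exact hsumm
  set φ : Fin (n - t) → Fin n := ⇑(T.orderEmbOfFin hTcard) with hφ
  refine ⟨fun j => x (φ j), φ, (T.orderEmbOfFin hTcard).strictMono, fun j => rfl, ?_⟩
  funext a
  have hTfilter : T.filter (fun i => x i = a) = S a := by
    ext i
    simp only [hT, Finset.mem_filter, Finset.mem_biUnion, Finset.mem_univ, true_and]
    constructor
    · rintro ⟨⟨b, hib⟩, hxa⟩
      have : b = a := (hfib b i hib).symm.trans hxa
      rwa [this] at hib
    · intro hi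
      exact ⟨⟨a, hi⟩, hfib a i hi⟩
  have himg : Finset.image φ (Finset.univ.filter (fun j => x (φ j) = a))
      = T.filter (fun i => x i = a) := by
    ext i
    simp only [Finset.mem_image, Finset.mem_filter, Finset.mem_univ, true_and]
    constructor
    · rintro ⟨j, hj, rfl⟩
      exact ⟨Finset.orderEmbOfFin_mem T hTcard j, hj⟩
    · rintro ⟨hiT, hxa⟩
      have : i ∈ Set.range φ := by
        rw [hφ]
        rw [Finset.range_orderEmbOfFin]
        exact hiT
      obtain ⟨j, rfl⟩ := this
      exact ⟨j, hxa, rfl⟩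
  have hcard : (Finset.univ.filter (fun j => x (φ j) = a)).card = m a := by
    have hinj : Function.Injective φ := (T.orderEmbOfFin hTcard).injective
    rw [← Finset.card_image_of_injective _ hinj, himg, hTfilter, hScard]
  rw [vecType, hcard, hm a]
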